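/- Let α be irrational, and let c : ℤ² → ℤ be defined by c(i,j) = ⌊(i+j)α⌋ − ⌊iα⌋ − ⌊jα⌋. Then c is annihilated by the Laurent polynomial (X^{(1,0)} − 1)(X^{(0,1)} − 1)(X^{(1,−1)} − 1), i.e., applying the three corresponding difference operators in succession to c yields the zero configuration. -/
import Mathlib


/-- The configuration `c(i,j) = ⌊(i+j)α⌋ - ⌊iα⌋ - ⌊jα⌋` is annihilated by
`(X^{(1,0)}-1)(X^{(0,1)}-1)(X^{(1,-1)}-1)`. -/
theorem stmt_14 (α : ℝ) (hα : Irrational α) (c : ℤ × ℤ → ℤ)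
    (hc : ∀ i j : ℤ, c (i, j) = ⌊((i : ℝ) + (j : ℝ)) * α⌋ - ⌊(i : ℝ) * α⌋ - ⌊(j : ℝ) * α⌋) :
    ∀ u : ℤ × ℤ,
      ((fun g : ℤ × ℤ → ℤ => fun w => g (w + (1, 0)) - g w)
        ((fun g : ℤ × ℤ → ℤ => fun w => g (w + (0, 1)) - g w)
          ((fun g : ℤ × ℤ → ℤ => fun w => g (w + (1, -1)) - g w) c))) u = 0 := by
  rintro ⟨i, j⟩
  simp only [Prod.mk_add_mk, hc]
  push_cast
  ring_nf
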